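/- Let Z = Σ_{j=1}^m w_j log(V_j) where the V_j are independent continuous positive random variables each satisfying P(a ≤ V_j ≤ b) > 0 for all 0 < a < b, and at least one weight w_{j_0} is nonzero. Then the cumulative distribution function of Z is continuous and strictly increasing on R. -/

import Mathlib

open MeasureTheory ProbabilityTheory Finset

/-- Auxiliary: a real random variable with null atoms and charging every
half-open interval has a continuous, strictly increasing cdf. -/
theorem cdf_aux_of_atomless_of_charge
    {Ω : Type*} [MeasurableSpace Ω] (μ : Measure Ω) [IsProbabilityMeasure μ]
    (Z : Ω → ℝ) (hZ : Measurable Z)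
    (hatom : ∀ c : ℝ, μ {ω | Z ω = c} = 0)
    (hpos : ∀ t₁ t₂ : ℝ, t₁ < t₂ → 0 < μ {ω | t₁ < Z ω ∧ Z ω ≤ t₂}) :
    Continuous (fun t : ℝ => (μ {ω | Z ω ≤ t}).toReal) ∧
    StrictMono (fun t : ℝ => (μ {ω | Z ω ≤ t}).toReal) := by
  have hν : IsProbabilityMeasure (μ.map Z) := Measure.isProbabilityMeasure_map hZ.aemeasurable
  have hIic : ∀ t : ℝ, μ {ω | Z ω ≤ t} = (μ.map Z) (Set.Iic t) := fun t => by
    rw [Measure.map_apply hZ measurableSet_Iic]; rfl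
  have hcdf : ∀ t : ℝ, (μ {ω | Z ω ≤ t}).toReal = cdf (μ.map Z) t := fun t => by
    rw [hIic, cdf_eq_real]; rfl
  have hfuneq : (fun t : ℝ => (μ {ω | Z ω ≤ t}).toReal) = fun t => cdf (μ.map Z) t :=
    funext hcdf
  constructor
  · rw [hfuneq]
    rw [continuous_iff_continuousAt]
    intro x
    have hsing : (cdf (μ.map Z)).measure {x} = 0 := by
      rw [measure_cdf, Measure.map_apply hZ (measurableSet_singleton x)]
      exact hatom x
    rw [(cdf (μ.map Z)).measure_singleton] at hsing
    have hle : Function.leftLim (cdf (μ.map Z)) x ≤ cdf (μ.map Z) x :=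
      (cdf (μ.map Z)).mono.leftLim_le le_rfl
    have hge : cdf (μ.map Z) x - Function.leftLim (cdf (μ.map Z)) x ≤ 0 :=
      ENNReal.ofReal_eq_zero.mp hsing
    rw [(cdf (μ.map Z)).mono.continuousAt_iff_leftLim_eq_rightLim,
      (cdf (μ.map Z)).rightLim_eq]
    linarith
  · intro t₁ t₂ h12
    have hunion : {ω | Z ω ≤ t₂} = {ω | Z ω ≤ t₁} ∪ {ω | t₁ < Z ω ∧ Z ω ≤ t₂} := by
      ext ω
      simp only [Set.mem_setOf_eq, Set.mem_union]
      constructor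
      · intro h
        rcases le_or_gt (Z ω) t₁ with h' | h'
        · exact Or.inl h'
        · exact Or.inr ⟨h', h⟩
      · rintro (h | ⟨_, h⟩)
        · exact h.trans h12.le
        · exact h
    have hdisj : Disjoint {ω | Z ω ≤ t₁} {ω | t₁ < Z ω ∧ Z ω ≤ t₂} := by
      rw [Set.disjoint_left]
      rintro ω h ⟨h', _⟩
      exact absurd h (not_le.mpr h')
    have hmeas2 : MeasurableSet {ω | t₁ < Z ω ∧ Z ω ≤ t₂} := by
      have : {ω | t₁ < Z ω ∧ Z ω ≤ t₂} = Z ⁻¹' Set.Ioc t₁ t₂ := rfl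
      rw [this]; exact hZ measurableSet_Ioc
    have hsplit : μ {ω | Z ω ≤ t₂} = μ {ω | Z ω ≤ t₁} + μ {ω | t₁ < Z ω ∧ Z ω ≤ t₂} := by
      rw [hunion, measure_union hdisj hmeas2]
    have hlt : μ {ω | Z ω ≤ t₁} < μ {ω | Z ω ≤ t₂} := by
      rw [hsplit]
      exact ENNReal.lt_add_right (measure_ne_top μ _) (hpos t₁ t₂ h12).ne'
    exact (ENNReal.toReal_lt_toReal (measure_ne_top μ _) (measure_ne_top μ _)).mpr hlt

/-- let `Z = ∑ⱼ wⱼ log Vⱼ` where the `Vⱼ` are independent,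
almost surely positive, atomless random variables with `P(a ≤ Vⱼ ≤ b) > 0` for
all `0 < a < b`, and assume some weight `w_{j₀} ≠ 0`. Then the cumulative
distribution function of `Z` is continuous and strictly increasing on `ℝ`. -/
theorem cdf_weighted_log_sum_continuous_strictMono
    {Ω : Type*} [MeasurableSpace Ω] (μ : Measure Ω) [IsProbabilityMeasure μ]
    (m : ℕ) (V : Fin m → Ω → ℝ) (w : Fin m → ℝ)
    (hmeas : ∀ j, Measurable (V j))
    (hindep : iIndepFun V μ)
    (hposV : ∀ j, ∀ᵐ ω ∂μ, 0 < V j ω)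
    (hatomless : ∀ j, ∀ c : ℝ, μ {ω | V j ω = c} = 0)
    (hcharge : ∀ j, ∀ a b : ℝ, 0 < a → a < b →
      0 < μ {ω | a ≤ V j ω ∧ V j ω ≤ b})
    (hw : ∃ j₀, w j₀ ≠ 0) :
    Continuous (fun t : ℝ =>
        (μ {ω | (∑ j, w j * Real.log (V j ω)) ≤ t}).toReal) ∧
    StrictMono (fun t : ℝ =>
        (μ {ω | (∑ j, w j * Real.log (V j ω)) ≤ t}).toReal) := by
  classical
  obtain ⟨j₀, hj₀⟩ := hw
  set f : Fin m → Ω → ℝ := fun j ω => w j * Real.log (V j ω) with hfdef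
  have hfmeas : ∀ j, Measurable (f j) := fun j =>
    (Real.measurable_log.comp (hmeas j)).const_mul (w j)
  have hfindep : iIndepFun f μ :=
    hindep.comp (fun j x => w j * Real.log x)
      (fun j => Real.measurable_log.const_mul (w j))
  set Z : Ω → ℝ := fun ω => ∑ j, f j ω with hZdef
  have hZmeas : Measurable Z := Finset.measurable_sum _ (fun j _ => hfmeas j)
  -- atoms of f j₀ are null
  have hXatom : ∀ x : ℝ, μ {ω | f j₀ ω = x} = 0 := by
    intro x
    have hnull : μ {ω | ¬ 0 < V j₀ ω} = 0 := by
      have := hposV j₀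
      rwa [MeasureTheory.ae_iff] at this
    have hsub : {ω | f j₀ ω = x} ⊆
        {ω | V j₀ ω = Real.exp (x / w j₀)} ∪ {ω | ¬ 0 < V j₀ ω} := by
      intro ω hω
      by_cases hpos : 0 < V j₀ ω
      · left
        have hlog : Real.log (V j₀ ω) = x / w j₀ := by
          rw [eq_div_iff hj₀, mul_comm]
          exact hω
        show V j₀ ω = Real.exp (x / w j₀)
        rw [← hlog, Real.exp_log hpos]
      · right; exact hpos
    exact measure_mono_null hsub (measure_union_null (hatomless j₀ _) hnull)
  -- atoms of Z are null
  have hZatom : ∀ c : ℝ, μ {ω | Z ω = c} = 0 := by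
    intro c
    set Y : Ω → ℝ := fun ω => ∑ j ∈ univ.erase j₀, f j ω with hYdef
    have hYmeas : Measurable Y := Finset.measurable_sum _ (fun j _ => hfmeas j)
    have hYX : IndepFun Y (f j₀) μ := by
      have h := hfindep.indepFun_finsetSum_of_notMem hfmeas (Finset.notMem_erase j₀ univ)
      have heq : (∑ j ∈ univ.erase j₀, f j) = Y := by
        ext ω; simp [hYdef, Finset.sum_apply]
      rwa [heq] at h
    have hmap := (indepFun_iff_map_prod_eq_prod_map_map hYmeas.aemeasurable
      (hfmeas j₀).aemeasurable).mp hYX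
    have hZYX : ∀ ω, Z ω = Y ω + f j₀ ω := fun ω => by
      rw [hZdef, hYdef]
      exact (Finset.sum_erase_add univ _ (mem_univ j₀)).symm
    have hsetmeas : MeasurableSet {p : ℝ × ℝ | p.1 + p.2 = c} :=
      (measurable_fst.add measurable_snd) (measurableSet_singleton c)
    have h1 : μ {ω | Z ω = c} = (μ.map (fun ω => (Y ω, f j₀ ω))) {p : ℝ × ℝ | p.1 + p.2 = c} := by
      rw [Measure.map_apply (hYmeas.prodMk (hfmeas j₀)) hsetmeas]
      congr 1
      ext ω
      simp [hZYX ω]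
    rw [h1, hmap, Measure.prod_apply hsetmeas]
    have h2 : ∀ y : ℝ, (μ.map (f j₀)) {a : ℝ | y + a = c} = 0 := by
      intro y
      have hset : {a : ℝ | y + a = c} = {c - y} := by
        ext x
        simp [eq_sub_iff_add_eq, add_comm]
      rw [hset, Measure.map_apply (hfmeas j₀) (measurableSet_singleton _)]
      exact hXatom (c - y)
    simp only [Set.preimage_setOf_eq]
    simp [h2]
  have hZpos : ∀ t₁ t₂ : ℝ, t₁ < t₂ → 0 < μ {ω | t₁ < Z ω ∧ Z ω ≤ t₂} := by
    intro t₁ t₂ h12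
    set s : ℝ := (t₁ + t₂) / 2 with hs
    set ε : ℝ := (t₂ - t₁) / 2 with hε
    have hε0 : 0 < ε := by rw [hε]; linarith
    set W : ℝ := (∑ j, |w j|) + 1 with hW
    have hW0 : 0 < W := by
      have h := Finset.sum_nonneg (fun j (_ : j ∈ univ) => abs_nonneg (w j))
      rw [hW]; linarith
    set δ : ℝ := ε / W with hδ
    have hδ0 : 0 < δ := div_pos hε0 hW0
    set L : Fin m → ℝ := fun j => if j = j₀ then s / w j₀ else 0 with hL
    set A : Fin m → Set Ω :=
      fun j => V j ⁻¹' Set.Icc (Real.exp (L j - δ)) (Real.exp (L j + δ)) with hA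
    have hsumL : ∑ j, w j * L j = s := by
      rw [hL, Finset.sum_eq_single j₀]
      · simp only [if_pos rfl, ↓reduceIte]
        field_simp
      · intro j _ hj; simp [hj]
      · intro h; exact absurd (mem_univ j₀) h
    have hsub : (⋂ j, A j) ⊆ {ω | t₁ < Z ω ∧ Z ω ≤ t₂} := by
      intro ω hω
      have hlog : ∀ j, |Real.log (V j ω) - L j| ≤ δ := by
        intro j
        have hmem := Set.mem_iInter.mp hω j
        have h1 : Real.exp (L j - δ) ≤ V j ω := hmem.1
        have h2 : V j ω ≤ Real.exp (L j + δ) := hmem.2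
        have hv0 : 0 < V j ω := lt_of_lt_of_le (Real.exp_pos _) h1
        rw [abs_le]
        constructor
        · have := (Real.le_log_iff_exp_le hv0).mpr h1
          linarith
        · have := (Real.log_le_iff_le_exp hv0).mpr h2
          linarith
      have hdist : |Z ω - s| < ε := by
        have h1 : Z ω - s = ∑ j, w j * (Real.log (V j ω) - L j) := by
          rw [hZdef]
          simp only [hfdef]
          rw [← hsumL, ← Finset.sum_sub_distrib]
          congr 1; ext j; ring
        calc |Z ω - s| = |∑ j, w j * (Real.log (V j ω) - L j)| := by rw [h1]
          _ ≤ ∑ j, |w j * (Real.log (V j ω) - L j)| := Finset.abs_sum_le_sum_abs _ _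
          _ ≤ ∑ j, |w j| * δ := Finset.sum_le_sum (fun j _ => by
              rw [abs_mul]
              exact mul_le_mul_of_nonneg_left (hlog j) (abs_nonneg _))
          _ = (∑ j, |w j|) * δ := by rw [← Finset.sum_mul]
          _ < W * δ := by
              apply mul_lt_mul_of_pos_right _ hδ0
              rw [hW]; linarith
          _ = ε := by rw [hδ]; field_simp
      rw [abs_lt] at hdist
      obtain ⟨hd1, hd2⟩ := hdist
      constructor
      · rw [hs, hε] at hd1; show t₁ < Z ω; linarith
      · rw [hs, hε] at hd2; show Z ω ≤ t₂; linarith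
    have hAcomap : ∀ j, MeasurableSet[(inferInstance : MeasurableSpace ℝ).comap (V j)] (A j) :=
      fun j => ⟨Set.Icc _ _, measurableSet_Icc, rfl⟩
    have hprod := hindep.meas_iInter hAcomap
    have hApos : ∀ j, 0 < μ (A j) := by
      intro j
      have h1 : (0:ℝ) < Real.exp (L j - δ) := Real.exp_pos _
      have h2 : Real.exp (L j - δ) < Real.exp (L j + δ) := Real.exp_lt_exp.mpr (by linarith)
      have hch := hcharge j _ _ h1 h2
      have heq : A j = {ω | Real.exp (L j - δ) ≤ V j ω ∧ V j ω ≤ Real.exp (L j + δ)} := rfl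
      rwa [heq]
    calc (0:ENNReal) < ∏ j, μ (A j) :=
          CanonicallyOrderedAdd.prod_pos.mpr (fun j _ => hApos j)
      _ = μ (⋂ j, A j) := hprod.symm
      _ ≤ μ {ω | t₁ < Z ω ∧ Z ω ≤ t₂} := measure_mono hsub
  exact cdf_aux_of_atomless_of_charge μ Z hZmeas hZatom hZpos
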